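/- Let k be a commutative ring, B ⊆ A an extension of k-algebras with 1_B = 1_A, and I an ideal of A with I ⊆ B. If B ⊆ A has depth 2n+1 (respectively, left or right depth 2n), then the quotient extension B/I ⊆ A/I also has depth 2n+1 (respectively, left or right depth 2n). In particular, d(B/I, A/I) ≤ d(B,A). -/

import Mathlib

/-! # Depth of subring extensions (Kadison–Young)
For a unital subring `B ⊆ A`, `CC B n` realizes the `n`-fold relative tensor power
`C_n(A,B) = A ⊗_B ⋯ ⊗_B A` (with `C_0(A,B) = B`) as a quotient of the iterated
tensor power over `ℤ` by the middle `B`-balancing relations, together with its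
natural left/right `A`- and `B`-actions.  Bimodule maps, the divisibility relation
`M ∣ q ⬝ N`, H-equivalence, the depth conditions and the minimum depth `d(B,A) ∈ ℕ∞`
are then defined exactly as in the paper. -/

open TensorProduct

universe u

variable (A : Type u) [Ring A]

/-- `Tpow A n` is the `(n+1)`-fold tensor power `A ⊗ℤ ⋯ ⊗ℤ A`. -/
noncomputable def Tpow : ℕ → ModuleCat.{u} ℤ
  | 0 => ModuleCat.of ℤ A
  | n + 1 => ModuleCat.of ℤ (A ⊗[ℤ] (Tpow n : Type u))

/-- Multiplication by `a : A` on the leftmost tensor factor. -/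
noncomputable def lmulT (a : A) : ∀ n, (Tpow A n : Type u) →ₗ[ℤ] (Tpow A n : Type u)
  | 0 => (LinearMap.mulLeft ℤ a : A →ₗ[ℤ] A)
  | n + 1 => LinearMap.rTensor (Tpow A n : Type u) (LinearMap.mulLeft ℤ a)

/-- Multiplication by `a : A` on the rightmost tensor factor. -/
noncomputable def rmulT (a : A) : ∀ n, (Tpow A n : Type u) →ₗ[ℤ] (Tpow A n : Type u)
  | 0 => (LinearMap.mulRight ℤ a : A →ₗ[ℤ] A)
  | n + 1 => LinearMap.lTensor A (rmulT a n)

private theorem lmulT_succ_apply (a : A) (n : ℕ) (x : A ⊗[ℤ] (Tpow A n : Type u)) :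
    lmulT A a (n+1) x = LinearMap.rTensor (Tpow A n : Type u) (LinearMap.mulLeft ℤ a) x := rfl

private theorem rmulT_succ_apply (a : A) (n : ℕ) (x : A ⊗[ℤ] (Tpow A n : Type u)) :
    rmulT A a (n+1) x = LinearMap.lTensor A (rmulT A a n) x := rfl

private theorem auxcomm (M : Type u) [AddCommGroup M] [Module ℤ M] (a : A) (g : M →ₗ[ℤ] M)
    (x : A ⊗[ℤ] M) :
    (LinearMap.rTensor M (LinearMap.mulLeft ℤ a)) ((LinearMap.lTensor A g) x) =
    (LinearMap.lTensor A g) ((LinearMap.rTensor M (LinearMap.mulLeft ℤ a)) x) := by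
  induction x using TensorProduct.induction_on with
  | zero => simp
  | tmul c t => simp
  | add y z hy hz => simp only [map_add, hy, hz]

theorem lmulT_rmulT_comm (a b : A) : ∀ (n : ℕ) (x : (Tpow A n : Type u)),
    lmulT A a n (rmulT A b n x) = rmulT A b n (lmulT A a n x)
  | 0, x => (mul_assoc a x b).symm
  | n + 1, x => by
    show (lmulT A a (n+1)) ((rmulT A b (n+1)) x) = (rmulT A b (n+1)) ((lmulT A a (n+1)) x)
    rw [lmulT, rmulT]
    exact auxcomm A (Tpow A n : Type u) a (rmulT A b n) x

private theorem aux1 (M : Type u) [AddCommGroup M] [Module ℤ M] (a c d : A) (t s : M) :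
    LinearMap.rTensor M (LinearMap.mulLeft ℤ a) (c ⊗ₜ[ℤ] t - d ⊗ₜ[ℤ] s) =
      (a * c) ⊗ₜ[ℤ] t - (a * d) ⊗ₜ[ℤ] s := by simp

private theorem aux2 (M : Type u) [AddCommGroup M] [Module ℤ M] (g : M →ₗ[ℤ] M) (c d : A)
    (t s : M) :
    LinearMap.lTensor A g (c ⊗ₜ[ℤ] t - d ⊗ₜ[ℤ] s) = c ⊗ₜ[ℤ] (g t) - d ⊗ₜ[ℤ] (g s) := by simp

private theorem aux3 (M : Type u) [AddCommGroup M] [Module ℤ M] (a c : A) (t : M) :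
    LinearMap.rTensor M (LinearMap.mulLeft ℤ a) (c ⊗ₜ[ℤ] t) = (a * c) ⊗ₜ[ℤ] t := by simp

private theorem aux4 (M : Type u) [AddCommGroup M] [Module ℤ M] (g : M →ₗ[ℤ] M) (c : A) (t : M) :
    LinearMap.lTensor A g (c ⊗ₜ[ℤ] t) = c ⊗ₜ[ℤ] (g t) := by simp


variable {A}

/-- The `B`-balancing relations inside `Tpow A n`. -/
noncomputable def rel (B : Subring A) : ∀ n, Submodule ℤ (Tpow A n : Type u)
  | 0 => ⊥
  | n + 1 =>
      Submodule.span ℤ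
        {x : (Tpow A (n+1) : Type u) |
          (∃ (a : A) (b : B) (t : (Tpow A n : Type u)),
            x = ((a * (b : A)) ⊗ₜ[ℤ] t : A ⊗[ℤ] (Tpow A n : Type u)) -
                 a ⊗ₜ[ℤ] (lmulT A (b : A) n t)) ∨
          (∃ (a : A) (r : (Tpow A n : Type u)), r ∈ rel B n ∧
            x = (a ⊗ₜ[ℤ] r : A ⊗[ℤ] (Tpow A n : Type u)))}

theorem rel_succ (B : Subring A) (n : ℕ) :
    rel B (n+1) =
      Submodule.span ℤ
        {x : (Tpow A (n+1) : Type u) |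
          (∃ (a : A) (b : B) (t : (Tpow A n : Type u)),
            x = ((a * (b : A)) ⊗ₜ[ℤ] t : A ⊗[ℤ] (Tpow A n : Type u)) -
                 a ⊗ₜ[ℤ] (lmulT A (b : A) n t)) ∨
          (∃ (a : A) (r : (Tpow A n : Type u)), r ∈ rel B n ∧
            x = (a ⊗ₜ[ℤ] r : A ⊗[ℤ] (Tpow A n : Type u)))} := rfl

theorem rel_le_comap_lmulT (B : Subring A) (a : A) :
    ∀ n, rel B n ≤ (rel B n).comap (lmulT A a n)
  | 0 => bot_le
  | n + 1 => by
    rw [rel_succ, Submodule.span_le]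
    rintro x (⟨a', b, t, rfl⟩ | ⟨a', r, hr, rfl⟩) <;>
      refine SetLike.mem_coe.mpr (Submodule.mem_comap.mpr ?_) <;> rw [lmulT_succ_apply]
    · rw [map_sub, LinearMap.rTensor_tmul, LinearMap.rTensor_tmul, LinearMap.mulLeft_apply,
        LinearMap.mulLeft_apply]
      refine Submodule.subset_span (Or.inl ⟨a * a', b, t, ?_⟩)
      rw [mul_assoc]
    · rw [LinearMap.rTensor_tmul, LinearMap.mulLeft_apply]
      exact Submodule.subset_span (Or.inr ⟨a * a', r, hr, rfl⟩)

theorem rel_le_comap_rmulT (B : Subring A) (a : A) :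
    ∀ n, rel B n ≤ (rel B n).comap (rmulT A a n)
  | 0 => bot_le
  | n + 1 => by
    rw [rel_succ, Submodule.span_le]
    rintro x (⟨a', b, t, rfl⟩ | ⟨a', r, hr, rfl⟩) <;>
      refine SetLike.mem_coe.mpr (Submodule.mem_comap.mpr ?_) <;> rw [rmulT_succ_apply]
    · rw [map_sub, LinearMap.lTensor_tmul, LinearMap.lTensor_tmul, ← lmulT_rmulT_comm]
      exact Submodule.subset_span (Or.inl ⟨a', b, rmulT A a n t, rfl⟩)
    · rw [LinearMap.lTensor_tmul]
      exact Submodule.subset_span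
        (Or.inr ⟨a', rmulT A a n r, rel_le_comap_rmulT B a n hr, rfl⟩)

/-- `CC B n` is `C_n(A,B) = A ⊗_B ⋯ ⊗_B A` (`n` factors of `A`), with `CC B 0 = B`. -/
noncomputable def CC (B : Subring A) : ℕ → ModuleCat.{u} ℤ
  | 0 => ModuleCat.of ℤ B
  | n + 1 => ModuleCat.of ℤ ((Tpow A n : Type u) ⧸ rel B n)

/-- The left `A`-action on `C_{n+1}(A,B)`. -/
noncomputable def lA (B : Subring A) (a : A) (n : ℕ) :
    (CC B (n+1) : Type u) →ₗ[ℤ] (CC B (n+1) : Type u) :=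
  ModuleCat.Hom.hom (ModuleCat.ofHom (Submodule.mapQ _ _ (lmulT A a n) (rel_le_comap_lmulT B a n)))

/-- The right `A`-action on `C_{n+1}(A,B)`. -/
noncomputable def rA (B : Subring A) (a : A) (n : ℕ) :
    (CC B (n+1) : Type u) →ₗ[ℤ] (CC B (n+1) : Type u) :=
  ModuleCat.Hom.hom (ModuleCat.ofHom (Submodule.mapQ _ _ (rmulT A a n) (rel_le_comap_rmulT B a n)))

/-- The left `B`-action on `C_n(A,B)`. -/
noncomputable def lB (B : Subring A) (b : B) : ∀ n, (CC B n : Type u) →ₗ[ℤ] (CC B n : Type u)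
  | 0 => (LinearMap.mulLeft ℤ b : B →ₗ[ℤ] B)
  | n + 1 => lA B (b : A) n

/-- The right `B`-action on `C_n(A,B)`. -/
noncomputable def rB (B : Subring A) (b : B) : ∀ n, (CC B n : Type u) →ₗ[ℤ] (CC B n : Type u)
  | 0 => (LinearMap.mulRight ℤ b : B →ₗ[ℤ] B)
  | n + 1 => rA B (b : A) n

/-- `f` is a morphism of `B`-`B`-bimodules `C_m(A,B) → C_n(A,B)`. -/
def IsBBHom (B : Subring A) {m n : ℕ} (f : (CC B m : Type u) →ₗ[ℤ] (CC B n : Type u)) : Prop :=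
  ∀ b : B, (∀ x, f (lB B b m x) = lB B b n (f x)) ∧ (∀ x, f (rB B b m x) = rB B b n (f x))

/-- `f` is a morphism of `A`-`B`-bimodules `C_{m+1}(A,B) → C_{n+1}(A,B)`. -/
def IsABHom (B : Subring A) {m n : ℕ}
    (f : (CC B (m+1) : Type u) →ₗ[ℤ] (CC B (n+1) : Type u)) : Prop :=
  (∀ (a : A) x, f (lA B a m x) = lA B a n (f x)) ∧
  (∀ (b : B) x, f (rB B b (m+1) x) = rB B b (n+1) (f x))

/-- `f` is a morphism of `B`-`A`-bimodules `C_{m+1}(A,B) → C_{n+1}(A,B)`. -/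
def IsBAHom (B : Subring A) {m n : ℕ}
    (f : (CC B (m+1) : Type u) →ₗ[ℤ] (CC B (n+1) : Type u)) : Prop :=
  (∀ (b : B) x, f (lB B b (m+1) x) = lB B b (n+1) (f x)) ∧
  (∀ (a : A) x, f (rA B a m x) = rA B a n (f x))

/-- `C_m(A,B)` divides a multiple of `C_n(A,B)` as `B`-`B`-bimodules. -/
def DividesBB (B : Subring A) (m n : ℕ) : Prop :=
  ∃ (r : ℕ) (f : Fin r → ((CC B m : Type u) →ₗ[ℤ] (CC B n : Type u)))
    (g : Fin r → ((CC B n : Type u) →ₗ[ℤ] (CC B m : Type u))),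
    (∀ i, IsBBHom B (f i)) ∧ (∀ i, IsBBHom B (g i)) ∧
      ∑ i, (g i).comp (f i) = LinearMap.id

/-- `C_{m+1}(A,B)` divides a multiple of `C_{n+1}(A,B)` as `A`-`B`-bimodules. -/
def DividesAB (B : Subring A) (m n : ℕ) : Prop :=
  ∃ (r : ℕ) (f : Fin r → ((CC B (m+1) : Type u) →ₗ[ℤ] (CC B (n+1) : Type u)))
    (g : Fin r → ((CC B (n+1) : Type u) →ₗ[ℤ] (CC B (m+1) : Type u))),
    (∀ i, IsABHom B (f i)) ∧ (∀ i, IsABHom B (g i)) ∧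
      ∑ i, (g i).comp (f i) = LinearMap.id

/-- `C_{m+1}(A,B)` divides a multiple of `C_{n+1}(A,B)` as `B`-`A`-bimodules. -/
def DividesBA (B : Subring A) (m n : ℕ) : Prop :=
  ∃ (r : ℕ) (f : Fin r → ((CC B (m+1) : Type u) →ₗ[ℤ] (CC B (n+1) : Type u)))
    (g : Fin r → ((CC B (n+1) : Type u) →ₗ[ℤ] (CC B (m+1) : Type u))),
    (∀ i, IsBAHom B (f i)) ∧ (∀ i, IsBAHom B (g i)) ∧
      ∑ i, (g i).comp (f i) = LinearMap.id

/-- H-equivalence of `C_m` and `C_n` as `B`-`B`-bimodules. -/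
def HequivBB (B : Subring A) (m n : ℕ) : Prop := DividesBB B m n ∧ DividesBB B n m

/-- H-equivalence of `C_{m+1}` and `C_{n+1}` as `A`-`B`-bimodules. -/
def HequivAB (B : Subring A) (m n : ℕ) : Prop := DividesAB B m n ∧ DividesAB B n m

/-- H-equivalence of `C_{m+1}` and `C_{n+1}` as `B`-`A`-bimodules. -/
def HequivBA (B : Subring A) (m n : ℕ) : Prop := DividesBA B m n ∧ DividesBA B n m

/-- The extension `B ⊆ A` has depth `d`: depth `2n+1` (`n ≥ 0`) means
`C_{n+1} ∼ C_n` as `B`-`B`-bimodules, and right (resp. left) depth `2n` (`n ≥ 1`)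
means `C_{n+1} ∼ C_n` as `A`-`B`- (resp. `B`-`A`-) bimodules. -/
def HasDepth (B : Subring A) (d : ℕ) : Prop :=
  (∃ n : ℕ, d = 2 * n + 1 ∧ HequivBB B (n+1) n) ∨
  (∃ n : ℕ, d = 2 * (n+1) ∧ (HequivAB B (n+1) n ∨ HequivBA B (n+1) n))

/-- The minimum depth `d(B,A) ∈ ℕ∞` of the subring extension `B ⊆ A`. -/
noncomputable def depth (B : Subring A) : ℕ∞ :=
  sInf {d : ℕ∞ | ∃ m : ℕ, HasDepth B m ∧ d = (m : ℕ∞)}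

namespace DepthAux
open LinearMap

variable {A A' : Type u} [Ring A] [Ring A'] (q : A →+* A')

/-- The quotient map on the tensor powers. -/
noncomputable def qT : ∀ n, (Tpow A n : Type u) →ₗ[ℤ] (Tpow A' n : Type u)
  | 0 => q.toAddMonoidHom.toIntLinearMap
  | n + 1 => TensorProduct.map q.toAddMonoidHom.toIntLinearMap (qT n)

theorem qT_zero_apply (x : A) : qT q 0 x = q x := rfl

theorem qT_succ_apply (n : ℕ) (x : A ⊗[ℤ] (Tpow A n : Type u)) :
    qT q (n + 1) x = TensorProduct.map q.toAddMonoidHom.toIntLinearMap (qT q n) x := rfl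

theorem qT_tmul (n : ℕ) (a : A) (t : (Tpow A n : Type u)) :
    qT q (n + 1) (a ⊗ₜ[ℤ] t) = (q a) ⊗ₜ[ℤ] (qT q n t) := rfl

theorem qT_surj (hq : Function.Surjective q) : ∀ n, Function.Surjective (qT q n)
  | 0 => hq
  | n + 1 => by
    rw [qT]
    intro z
    induction z using TensorProduct.induction_on with
    | zero => exact ⟨0, map_zero _⟩
    | tmul a t =>
      obtain ⟨a0, rfl⟩ := hq a
      obtain ⟨t0, rfl⟩ := qT_surj hq n t
      exact ⟨a0 ⊗ₜ[ℤ] t0, rfl⟩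
    | add x y hx hy =>
      obtain ⟨x0, rfl⟩ := hx
      obtain ⟨y0, rfl⟩ := hy
      exact ⟨x0 + y0, map_add _ _ _⟩

theorem qT_lmulT (a : A) : ∀ n (x : (Tpow A n : Type u)),
    qT q n (lmulT A a n x) = lmulT A' (q a) n (qT q n x)
  | 0, x => map_mul q a (show A from x)
  | n + 1, x => by
    induction x using TensorProduct.induction_on with
    | zero => erw [map_zero]
    | tmul c t =>
      rw [lmulT_succ_apply, LinearMap.rTensor_tmul, qT_tmul, qT_tmul, lmulT_succ_apply,
        LinearMap.rTensor_tmul]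
      simp only [LinearMap.mulLeft_apply, map_mul]; rfl
    | add x y hx hy => erw [map_add, map_add, map_add, map_add, hx, hy]

theorem qT_rmulT (a : A) : ∀ n (x : (Tpow A n : Type u)),
    qT q n (rmulT A a n x) = rmulT A' (q a) n (qT q n x)
  | 0, x => map_mul q (show A from x) a
  | n + 1, x => by
    induction x using TensorProduct.induction_on with
    | zero => erw [map_zero]
    | tmul c t =>
      rw [rmulT_succ_apply, LinearMap.lTensor_tmul, qT_tmul, qT_tmul, rmulT_succ_apply,
        LinearMap.lTensor_tmul, qT_rmulT a n t]
    | add x y hx hy => erw [map_add, map_add, map_add, map_add, hx, hy]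

theorem rmulT_zero : ∀ n, rmulT A' (0 : A') n = 0
  | 0 => by ext x; exact mul_zero (show A' from x)
  | n + 1 => by rw [rmulT, rmulT_zero n, LinearMap.lTensor_zero]; rfl

variable (B : Subring A)

/-- Right multiples by elements of the kernel of `q`, inside `Tpow A n`. -/
noncomputable def Isp (n : ℕ) : Submodule ℤ (Tpow A n : Type u) :=
  Submodule.span ℤ {y | ∃ x, q x = 0 ∧ ∃ t, y = rmulT A x n t}

/-- The balancing relations together with right kernel-multiples. -/
noncomputable def J (n : ℕ) : Submodule ℤ (Tpow A n : Type u) := rel B n ⊔ Isp q n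

theorem tmul_mem_J (n : ℕ) (a : A) {t : (Tpow A n : Type u)} (ht : t ∈ J q B n) :
    (a ⊗ₜ[ℤ] t : A ⊗[ℤ] (Tpow A n : Type u)) ∈ J q B (n + 1) := by
  have h : J q B n ≤ (J q B (n+1)).comap ((TensorProduct.mk ℤ A (Tpow A n : Type u)) a) := by
    rw [J, sup_le_iff]
    constructor
    · intro r hr
      exact Submodule.mem_sup_left (Submodule.subset_span (Or.inr ⟨a, r, hr, rfl⟩))
    · rw [Isp, Submodule.span_le]
      rintro y ⟨x, hx, t0, rfl⟩
      simp only [SetLike.mem_coe, Submodule.mem_comap, TensorProduct.mk_apply]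
      refine Submodule.mem_sup_right (Submodule.subset_span ⟨x, hx, a ⊗ₜ[ℤ] t0, ?_⟩)
      rw [rmulT_succ_apply, LinearMap.lTensor_tmul]
      rfl
  exact h ht

theorem lmulT_mem_J (hker : ∀ x, q x = 0 → x ∈ B) :
    ∀ (n : ℕ) (x : A), q x = 0 → ∀ t : (Tpow A n : Type u), lmulT A x n t ∈ J q B n
  | 0, x, hx, t => by
    refine Submodule.mem_sup_right (Submodule.subset_span ⟨x * (show A from t), ?_, (1 : A), ?_⟩)
    · rw [map_mul, hx, zero_mul]
    · show x * (show A from t) = 1 * (x * (show A from t))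
      rw [one_mul]
  | n + 1, x, hx, t => by
    induction t using TensorProduct.induction_on with
    | zero => erw [map_zero]; exact (J q B (n+1)).zero_mem
    | tmul c s =>
      rw [lmulT_succ_apply, LinearMap.rTensor_tmul]
      have hxc : q (x * c) = 0 := by rw [map_mul, hx, zero_mul]
      have hrel : ((1 * (x * c)) ⊗ₜ[ℤ] s : A ⊗[ℤ] (Tpow A n : Type u)) -
          1 ⊗ₜ[ℤ] (lmulT A (x * c) n s) ∈ rel B (n+1) :=
        Submodule.subset_span (Or.inl ⟨1, ⟨x * c, hker _ hxc⟩, s, rfl⟩)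
      have h2 : ((1 : A) ⊗ₜ[ℤ] (lmulT A (x * c) n s) : A ⊗[ℤ] (Tpow A n : Type u)) ∈
          J q B (n+1) :=
        tmul_mem_J q B n 1 (lmulT_mem_J hker n (x * c) hxc s)
      have h3 := (J q B (n+1)).add_mem (Submodule.mem_sup_left hrel) h2
      erw [sub_add_cancel, one_mul] at h3
      simpa only [LinearMap.mulLeft_apply] using h3
    | add y z hy hz => erw [map_add]; exact add_mem hy hz

theorem ker_qT_le_J (hq : Function.Surjective q) (hker : ∀ x, q x = 0 → x ∈ B) :
    ∀ n, LinearMap.ker (qT q n) ≤ J q B n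
  | 0 => fun x hx => Submodule.mem_sup_right (Submodule.subset_span
      ⟨show A from x, hx, (1 : A), show (show A from x) = 1 * (show A from x) from (one_mul _).symm⟩)
  | n + 1 => by
    intro t ht
    have hqs : Function.Surjective (⇑(AddMonoidHom.toIntLinearMap q.toAddMonoidHom)) := hq
    letI : Module ℤ (LinearMap.ker (qT q n)) := (LinearMap.ker (qT q n)).module
    have hk := TensorProduct.map_ker
      (LinearMap.exact_subtype_ker_map (q.toAddMonoidHom.toIntLinearMap)) hqs
      (LinearMap.exact_subtype_ker_map (qT q n)) (qT_surj q hq n)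
    have hL : ∀ z : (A ⊗[ℤ] (LinearMap.ker (qT q n) : Type u)),
        LinearMap.lTensor A (LinearMap.ker (qT q n)).subtype z ∈ J q B (n+1) := by
      intro z
      induction z using TensorProduct.induction_on with
      | zero => rw [map_zero]; exact (J q B (n+1)).zero_mem
      | tmul a k =>
        rw [LinearMap.lTensor_tmul]
        exact tmul_mem_J q B n a (ker_qT_le_J hq hker n k.2)
      | add y z hy hz => rw [map_add]; exact add_mem hy hz
    have hR : ∀ z : ((LinearMap.ker (AddMonoidHom.toIntLinearMap q.toAddMonoidHom) : Type u)
        ⊗[ℤ] (Tpow A n : Type u)),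
        LinearMap.rTensor (Tpow A n : Type u)
          (LinearMap.ker (AddMonoidHom.toIntLinearMap q.toAddMonoidHom)).subtype z ∈
          J q B (n+1) := by
      intro z
      induction z using TensorProduct.induction_on with
      | zero => rw [map_zero]; exact (J q B (n+1)).zero_mem
      | tmul i s =>
        rw [LinearMap.rTensor_tmul]
        have his : ((i : A) ⊗ₜ[ℤ] s : A ⊗[ℤ] (Tpow A n : Type u)) =
            lmulT A (i : A) (n+1) ((1 : A) ⊗ₜ[ℤ] s) := by
          rw [lmulT_succ_apply, LinearMap.rTensor_tmul, LinearMap.mulLeft_apply, mul_one]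
        rw [Submodule.coe_subtype, his]
        exact lmulT_mem_J q B hker (n+1) (i : A) i.2 _
      | add y z hy hz => rw [map_add]; exact add_mem hy hz
    have ht2 : t ∈ LinearMap.ker
        (TensorProduct.map q.toAddMonoidHom.toIntLinearMap (qT q n)) := ht
    rw [hk] at ht2
    obtain ⟨u, hu, v, hv, rfl⟩ := (Submodule.mem_sup (M := A ⊗[ℤ] (Tpow A n : Type u))).1 ht2
    obtain ⟨zu, rfl⟩ := hu
    obtain ⟨zv, rfl⟩ := hv
    exact add_mem (hL zu) (hR zv)

theorem rel_le_comap_qT : ∀ n, rel B n ≤ (rel (B.map q) n).comap (qT q n)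
  | 0 => bot_le
  | n + 1 => by
    rw [rel_succ, Submodule.span_le]
    rintro x (⟨a, b, t, rfl⟩ | ⟨a, r, hr, rfl⟩) <;>
      refine SetLike.mem_coe.mpr (Submodule.mem_comap.mpr ?_)
    · erw [map_sub, qT_tmul, qT_tmul, qT_lmulT]
      refine Submodule.subset_span (Or.inl ⟨q a, ⟨q (b : A), ⟨(b : A), b.2, rfl⟩⟩, qT q n t, ?_⟩)
      rw [map_mul]; rfl
    · rw [qT_tmul]
      exact Submodule.subset_span (Or.inr ⟨q a, qT q n r, rel_le_comap_qT n hr, rfl⟩)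

theorem rel_map_le (hq : Function.Surjective q) :
    ∀ n, rel (B.map q) n ≤ Submodule.map (qT q n) (rel B n)
  | 0 => bot_le
  | n + 1 => by
    rw [rel_succ, Submodule.span_le]
    rintro x (⟨a', b', t', rfl⟩ | ⟨a', r', hr', rfl⟩)
    · obtain ⟨a, rfl⟩ := hq a'
      obtain ⟨b0, hb0, hb⟩ := b'.2
      obtain ⟨t, rfl⟩ := qT_surj q hq n t'
      refine ⟨(a * b0) ⊗ₜ[ℤ] t - a ⊗ₜ[ℤ] (lmulT A b0 n t),
        Submodule.subset_span (Or.inl ⟨a, ⟨b0, hb0⟩, t, rfl⟩), ?_⟩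
      erw [map_sub, qT_tmul, qT_tmul, qT_lmulT, map_mul, hb]; rfl
    · obtain ⟨a, rfl⟩ := hq a'
      obtain ⟨r, hr, rfl⟩ := rel_map_le hq n hr'
      exact ⟨a ⊗ₜ[ℤ] r, Submodule.subset_span (Or.inr ⟨a, r, hr, rfl⟩), qT_tmul q n a r⟩

theorem lA_mk {A : Type u} [Ring A] (B : Subring A) (a : A) (n : ℕ) (t : (Tpow A n : Type u)) :
    lA B a n (Submodule.Quotient.mk t) = Submodule.Quotient.mk (lmulT A a n t) :=
  Submodule.mapQ_apply (h := rel_le_comap_lmulT B a n) _ _ _ _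

theorem rA_mk {A : Type u} [Ring A] (B : Subring A) (a : A) (n : ℕ) (t : (Tpow A n : Type u)) :
    rA B a n (Submodule.Quotient.mk t) = Submodule.Quotient.mk (rmulT A a n t) :=
  Submodule.mapQ_apply (h := rel_le_comap_rmulT B a n) _ _ _ _

/-- The induced map `B → B'` on degree `0`. -/
noncomputable def piC0 : (B : Type u) →ₗ[ℤ] (B.map q : Type u) :=
  AddMonoidHom.toIntLinearMap
    { toFun := fun b => ⟨q (b : A), ⟨(b : A), b.2, rfl⟩⟩
      map_zero' := Subtype.ext (by simp)
      map_add' := fun x y => Subtype.ext (by simp) }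

/-- The induced map `C_n(A,B) → C_n(A',B')`. -/
noncomputable def piC : ∀ n, (CC B n : Type u) →ₗ[ℤ] (CC (B.map q) n : Type u)
  | 0 => piC0 q B
  | n + 1 => ModuleCat.Hom.hom (ModuleCat.ofHom (Submodule.mapQ _ _ (qT q n) (rel_le_comap_qT q B n)))

theorem piC_mk (n : ℕ) (t : (Tpow A n : Type u)) :
    piC q B (n+1) (Submodule.Quotient.mk t) = Submodule.Quotient.mk (qT q n t) := rfl

theorem piC_surj (hq : Function.Surjective q) : ∀ n, Function.Surjective (piC q B n)
  | 0 => by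
    rintro ⟨y, x, hx, rfl⟩
    exact ⟨⟨x, hx⟩, rfl⟩
  | n + 1 => by
    intro y
    obtain ⟨t', rfl⟩ := Submodule.Quotient.mk_surjective _ y
    obtain ⟨t, rfl⟩ := qT_surj q hq n t'
    exact ⟨Submodule.Quotient.mk t, piC_mk q B n t⟩

theorem piC_lA (n : ℕ) (a : A) (x : (CC B (n+1) : Type u)) :
    piC q B (n+1) (lA B a n x) = lA (B.map q) (q a) n (piC q B (n+1) x) := by
  obtain ⟨t, rfl⟩ := Submodule.Quotient.mk_surjective _ x
  rw [lA_mk, piC_mk, piC_mk, lA_mk, qT_lmulT]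

theorem piC_rA (n : ℕ) (a : A) (x : (CC B (n+1) : Type u)) :
    piC q B (n+1) (rA B a n x) = rA (B.map q) (q a) n (piC q B (n+1) x) := by
  obtain ⟨t, rfl⟩ := Submodule.Quotient.mk_surjective _ x
  rw [rA_mk, piC_mk, piC_mk, rA_mk, qT_rmulT]

theorem piC_lB : ∀ (n : ℕ) (b : (B : Type u)) (x : (CC B n : Type u)),
    piC q B n (lB B b n x) =
      lB (B.map q) ⟨q (b : A), ⟨(b : A), b.2, rfl⟩⟩ n (piC q B n x)
  | 0, b, x => Subtype.ext (map_mul q _ _)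
  | n + 1, b, x => piC_lA q B n (b : A) x

theorem piC_rB : ∀ (n : ℕ) (b : (B : Type u)) (x : (CC B n : Type u)),
    piC q B n (rB B b n x) =
      rB (B.map q) ⟨q (b : A), ⟨(b : A), b.2, rfl⟩⟩ n (piC q B n x)
  | 0, b, x => Subtype.ext (map_mul q _ _)
  | n + 1, b, x => piC_rA q B n (b : A) x

theorem rB_ker_zero : ∀ (n : ℕ) (b' : ((B.map q) : Type u)), (b' : A') = 0 →
    ∀ z : (CC (B.map q) n : Type u), rB (B.map q) b' n z = 0
  | 0, b', hb', z => Subtype.ext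
      (show ((show ↥(B.map q) from z) : A') * (b' : A') = 0 by rw [hb', mul_zero])
  | n + 1, b', hb', z => by
    obtain ⟨t, rfl⟩ := Submodule.Quotient.mk_surjective _ z
    show rA (B.map q) (b' : A') n (Submodule.Quotient.mk t) = 0
    rw [hb', rA_mk, rmulT_zero, LinearMap.zero_apply, Submodule.Quotient.mk_zero]; rfl

/-- Right multiples by kernel elements inside `C_n(A,B)`. -/
noncomputable def K (n : ℕ) : Submodule ℤ (CC B n : Type u) :=
  Submodule.span ℤ {y | ∃ b : (B : Type u), q ((b : A)) = 0 ∧ ∃ c, y = rB B b n c}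

theorem K_le_ker (n : ℕ) : K q B n ≤ LinearMap.ker (piC q B n) := by
  rw [K, Submodule.span_le]
  rintro y ⟨b, hb, c, rfl⟩
  simp only [SetLike.mem_coe, LinearMap.mem_ker]
  rw [piC_rB]
  exact rB_ker_zero q B n _ hb _

theorem ker_le_K (hq : Function.Surjective q) (hker : ∀ x, q x = 0 → x ∈ B) :
    ∀ (n : ℕ) (x : (CC B n : Type u)), piC q B n x = 0 → x ∈ K q B n
  | 0, x, hx => by
    have hqx : q ((show (B : Type u) from x) : A) = 0 := congrArg Subtype.val hx
    exact Submodule.subset_span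
      ⟨show (B : Type u) from x, hqx, show (CC B 0 : Type u) from (1 : (B : Type u)), Subtype.ext (one_mul _).symm⟩
  | n + 1, x, hx => by
    obtain ⟨t, rfl⟩ := Submodule.Quotient.mk_surjective _ x
    rw [piC_mk] at hx
    have h1 : qT q n t ∈ rel (B.map q) n := (Submodule.Quotient.mk_eq_zero _).1 hx
    obtain ⟨s, hs, hst⟩ := rel_map_le q B hq n h1
    have h2 : t - s ∈ LinearMap.ker (qT q n) := by
      rw [LinearMap.mem_ker, map_sub, hst, sub_self]
    have h3 : t ∈ J q B n := by
      have h4 := add_mem (ker_qT_le_J q B hq hker n h2)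
        (Submodule.mem_sup_left hs : s ∈ J q B n)
      rwa [sub_add_cancel] at h4
    rw [J] at h3
    obtain ⟨r, hr, i, hi, rfl⟩ := Submodule.mem_sup.1 h3
    rw [Submodule.Quotient.mk_add, (Submodule.Quotient.mk_eq_zero _).2 hr, zero_add]
    have hIK : ∀ i ∈ Isp q n,
        (Submodule.Quotient.mk i : (CC B (n+1) : Type u)) ∈ K q B (n+1) := by
      intro i hi
      induction hi using Submodule.span_induction with
      | mem y hy =>
        obtain ⟨x0, hx0, t0, rfl⟩ := hy
        refine Submodule.subset_span ⟨⟨x0, hker x0 hx0⟩, hx0, Submodule.Quotient.mk t0, ?_⟩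
        show _ = rA B x0 n (Submodule.Quotient.mk t0)
        rw [rA_mk]
      | zero => exact (K q B (n+1)).zero_mem
      | add y z _ _ hy hz => exact (K q B (n+1)).add_mem hy hz
      | smul a y _ hy =>
        have e := int_smul_eq_zsmul (Submodule.Quotient.module (rel B n)) a
          (Submodule.Quotient.mk y)
        exact (congrArg (· ∈ K q B (n+1)) e).mpr ((K q B (n+1)).smul_mem a hy)
    exact hIK i hi

theorem descends (hq : Function.Surjective q) (hker : ∀ x, q x = 0 → x ∈ B) {m n : ℕ}
    (f : (CC B m : Type u) →ₗ[ℤ] (CC B n : Type u))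
    (hf : ∀ (b : (B : Type u)) (x), f (rB B b m x) = rB B b n (f x)) :
    ∃ f' : (CC (B.map q) m : Type u) →ₗ[ℤ] (CC (B.map q) n : Type u),
      ∀ x, f' (piC q B m x) = piC q B n (f x) := by
  have hK : K q B m ≤ (K q B n).comap f := by
    rw [K, Submodule.span_le]
    rintro y ⟨b, hb, c, rfl⟩
    simp only [SetLike.mem_coe, Submodule.mem_comap]
    rw [hf b c]
    exact Submodule.subset_span ⟨b, hb, f c, rfl⟩
  have hcond : LinearMap.ker (piC q B m) ≤ LinearMap.ker ((piC q B n).comp f) := by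
    intro x hx
    have h1 : x ∈ K q B m := ker_le_K q B hq hker m x hx
    have h2 : f x ∈ K q B n := hK h1
    have h3 := K_le_ker q B n h2
    simpa using h3
  set E := LinearMap.quotKerEquivOfSurjective (piC q B m) (piC_surj q B hq m) with hE
  letI : Module ℤ ((CC B m : Type u) ⧸ LinearMap.ker (piC q B m)) := Submodule.Quotient.module _
  refine ⟨((LinearMap.ker (piC q B m)).liftQ ((piC q B n).comp f) hcond).comp
    E.symm.toLinearMap, fun x => ?_⟩
  have hEmk : E (Submodule.Quotient.mk x) = piC q B m x := rfl
  have hsymm : E.symm (piC q B m x) = Submodule.Quotient.mk x := by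
    rw [LinearEquiv.symm_apply_eq, hEmk]
  rw [LinearMap.comp_apply, LinearEquiv.coe_toLinearMap, hsymm, Submodule.liftQ_apply,
    LinearMap.comp_apply]

theorem dividesBB_map (hq : Function.Surjective q) (hker : ∀ x, q x = 0 → x ∈ B) {m n : ℕ}
    (h : DividesBB B m n) : DividesBB (B.map q) m n := by
  obtain ⟨r, f, g, hf, hg, hsum⟩ := h
  choose f' hf' using fun i => descends q B hq hker (f i) (fun b x => (hf i b).2 x)
  choose g' hg' using fun i => descends q B hq hker (g i) (fun b x => (hg i b).2 x)
  refine ⟨r, f', g', fun i b' => ?_, fun i b' => ?_, ?_⟩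
  · obtain ⟨b0, hb0, hb⟩ := b'.2
    have hb' : b' = ⟨q ((⟨b0, hb0⟩ : (B : Type u)) : A), ⟨b0, hb0, rfl⟩⟩ := Subtype.ext hb.symm
    constructor
    · intro y
      obtain ⟨x, rfl⟩ := piC_surj q B hq m y
      rw [hb', ← piC_lB q B m ⟨b0, hb0⟩ x, hf' i (lB B ⟨b0, hb0⟩ m x), hf' i x,
        (hf i ⟨b0, hb0⟩).1 x, piC_lB q B n ⟨b0, hb0⟩ (f i x)]
    · intro y
      obtain ⟨x, rfl⟩ := piC_surj q B hq m y
      rw [hb', ← piC_rB q B m ⟨b0, hb0⟩ x, hf' i (rB B ⟨b0, hb0⟩ m x), hf' i x,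
        (hf i ⟨b0, hb0⟩).2 x, piC_rB q B n ⟨b0, hb0⟩ (f i x)]
  · obtain ⟨b0, hb0, hb⟩ := b'.2
    have hb' : b' = ⟨q ((⟨b0, hb0⟩ : (B : Type u)) : A), ⟨b0, hb0, rfl⟩⟩ := Subtype.ext hb.symm
    constructor
    · intro y
      obtain ⟨x, rfl⟩ := piC_surj q B hq n y
      rw [hb', ← piC_lB q B n ⟨b0, hb0⟩ x, hg' i (lB B ⟨b0, hb0⟩ n x), hg' i x,
        (hg i ⟨b0, hb0⟩).1 x, piC_lB q B m ⟨b0, hb0⟩ (g i x)]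
    · intro y
      obtain ⟨x, rfl⟩ := piC_surj q B hq n y
      rw [hb', ← piC_rB q B n ⟨b0, hb0⟩ x, hg' i (rB B ⟨b0, hb0⟩ n x), hg' i x,
        (hg i ⟨b0, hb0⟩).2 x, piC_rB q B m ⟨b0, hb0⟩ (g i x)]
  · refine LinearMap.ext fun y => ?_
    obtain ⟨x, rfl⟩ := piC_surj q B hq m y
    have hx := LinearMap.congr_fun hsum x
    simp only [LinearMap.sum_apply, LinearMap.comp_apply, LinearMap.id_apply] at hx ⊢
    calc ∑ i, g' i (f' i (piC q B m x)) = ∑ i, piC q B m (g i (f i x)) := by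
          refine Finset.sum_congr rfl fun i _ => ?_
          rw [hf' i x, hg' i (f i x)]
      _ = piC q B m (∑ i, g i (f i x)) := (map_sum _ _ _).symm
      _ = piC q B m x := by rw [hx]

theorem dividesAB_map (hq : Function.Surjective q) (hker : ∀ x, q x = 0 → x ∈ B) {m n : ℕ}
    (h : DividesAB B m n) : DividesAB (B.map q) m n := by
  obtain ⟨r, f, g, hf, hg, hsum⟩ := h
  choose f' hf' using fun i => descends q B hq hker (f i) (fun b x => (hf i).2 b x)
  choose g' hg' using fun i => descends q B hq hker (g i) (fun b x => (hg i).2 b x)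
  refine ⟨r, f', g', fun i => ⟨?_, ?_⟩, fun i => ⟨?_, ?_⟩, ?_⟩
  · intro a' y
    obtain ⟨a, rfl⟩ := hq a'
    obtain ⟨x, rfl⟩ := piC_surj q B hq (m+1) y
    rw [← piC_lA q B m a x, hf' i (lA B a m x), hf' i x, (hf i).1 a x,
      piC_lA q B n a (f i x)]
  · intro b' y
    obtain ⟨b0, hb0, hb⟩ := b'.2
    have hb' : b' = ⟨q ((⟨b0, hb0⟩ : (B : Type u)) : A), ⟨b0, hb0, rfl⟩⟩ := Subtype.ext hb.symm
    obtain ⟨x, rfl⟩ := piC_surj q B hq (m+1) y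
    rw [hb', ← piC_rB q B (m+1) ⟨b0, hb0⟩ x, hf' i (rB B ⟨b0, hb0⟩ (m+1) x), hf' i x,
      (hf i).2 ⟨b0, hb0⟩ x, piC_rB q B (n+1) ⟨b0, hb0⟩ (f i x)]
  · intro a' y
    obtain ⟨a, rfl⟩ := hq a'
    obtain ⟨x, rfl⟩ := piC_surj q B hq (n+1) y
    rw [← piC_lA q B n a x, hg' i (lA B a n x), hg' i x, (hg i).1 a x,
      piC_lA q B m a (g i x)]
  · intro b' y
    obtain ⟨b0, hb0, hb⟩ := b'.2
    have hb' : b' = ⟨q ((⟨b0, hb0⟩ : (B : Type u)) : A), ⟨b0, hb0, rfl⟩⟩ := Subtype.ext hb.symm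
    obtain ⟨x, rfl⟩ := piC_surj q B hq (n+1) y
    rw [hb', ← piC_rB q B (n+1) ⟨b0, hb0⟩ x, hg' i (rB B ⟨b0, hb0⟩ (n+1) x), hg' i x,
      (hg i).2 ⟨b0, hb0⟩ x, piC_rB q B (m+1) ⟨b0, hb0⟩ (g i x)]
  · refine LinearMap.ext fun y => ?_
    obtain ⟨x, rfl⟩ := piC_surj q B hq (m+1) y
    have hx := LinearMap.congr_fun hsum x
    simp only [LinearMap.sum_apply, LinearMap.comp_apply, LinearMap.id_apply] at hx ⊢
    calc ∑ i, g' i (f' i (piC q B (m+1) x)) = ∑ i, piC q B (m+1) (g i (f i x)) := by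
          refine Finset.sum_congr rfl fun i _ => ?_
          rw [hf' i x, hg' i (f i x)]
      _ = piC q B (m+1) (∑ i, g i (f i x)) := (map_sum _ _ _).symm
      _ = piC q B (m+1) x := by rw [hx]

theorem dividesBA_map (hq : Function.Surjective q) (hker : ∀ x, q x = 0 → x ∈ B) {m n : ℕ}
    (h : DividesBA B m n) : DividesBA (B.map q) m n := by
  obtain ⟨r, f, g, hf, hg, hsum⟩ := h
  have hfr : ∀ i (b : (B : Type u)) (x), f i (rB B b (m+1) x) = rB B b (n+1) (f i x) :=
    fun i b x => (hf i).2 (b : A) x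
  have hgr : ∀ i (b : (B : Type u)) (x), g i (rB B b (n+1) x) = rB B b (m+1) (g i x) :=
    fun i b x => (hg i).2 (b : A) x
  choose f' hf' using fun i => descends q B hq hker (f i) (hfr i)
  choose g' hg' using fun i => descends q B hq hker (g i) (hgr i)
  refine ⟨r, f', g', fun i => ⟨?_, ?_⟩, fun i => ⟨?_, ?_⟩, ?_⟩
  · intro b' y
    obtain ⟨b0, hb0, hb⟩ := b'.2
    have hb' : b' = ⟨q ((⟨b0, hb0⟩ : (B : Type u)) : A), ⟨b0, hb0, rfl⟩⟩ := Subtype.ext hb.symm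
    obtain ⟨x, rfl⟩ := piC_surj q B hq (m+1) y
    rw [hb', ← piC_lB q B (m+1) ⟨b0, hb0⟩ x, hf' i (lB B ⟨b0, hb0⟩ (m+1) x), hf' i x,
      (hf i).1 ⟨b0, hb0⟩ x, piC_lB q B (n+1) ⟨b0, hb0⟩ (f i x)]
  · intro a' y
    obtain ⟨a, rfl⟩ := hq a'
    obtain ⟨x, rfl⟩ := piC_surj q B hq (m+1) y
    rw [← piC_rA q B m a x, hf' i (rA B a m x), hf' i x, (hf i).2 a x,
      piC_rA q B n a (f i x)]
  · intro b' y
    obtain ⟨b0, hb0, hb⟩ := b'.2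
    have hb' : b' = ⟨q ((⟨b0, hb0⟩ : (B : Type u)) : A), ⟨b0, hb0, rfl⟩⟩ := Subtype.ext hb.symm
    obtain ⟨x, rfl⟩ := piC_surj q B hq (n+1) y
    rw [hb', ← piC_lB q B (n+1) ⟨b0, hb0⟩ x, hg' i (lB B ⟨b0, hb0⟩ (n+1) x), hg' i x,
      (hg i).1 ⟨b0, hb0⟩ x, piC_lB q B (m+1) ⟨b0, hb0⟩ (g i x)]
  · intro a' y
    obtain ⟨a, rfl⟩ := hq a'
    obtain ⟨x, rfl⟩ := piC_surj q B hq (n+1) y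
    rw [← piC_rA q B n a x, hg' i (rA B a n x), hg' i x, (hg i).2 a x,
      piC_rA q B m a (g i x)]
  · refine LinearMap.ext fun y => ?_
    obtain ⟨x, rfl⟩ := piC_surj q B hq (m+1) y
    have hx := LinearMap.congr_fun hsum x
    simp only [LinearMap.sum_apply, LinearMap.comp_apply, LinearMap.id_apply] at hx ⊢
    calc ∑ i, g' i (f' i (piC q B (m+1) x)) = ∑ i, piC q B (m+1) (g i (f i x)) := by
          refine Finset.sum_congr rfl fun i _ => ?_
          rw [hf' i x, hg' i (f i x)]
      _ = piC q B (m+1) (∑ i, g i (f i x)) := (map_sum _ _ _).symm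
      _ = piC q B (m+1) x := by rw [hx]

theorem hasDepth_map (hq : Function.Surjective q) (hker : ∀ x, q x = 0 → x ∈ B) (d : ℕ)
    (h : HasDepth B d) : HasDepth (B.map q) d := by
  rcases h with ⟨n, hd, h1, h2⟩ | ⟨n, hd, h⟩
  · exact Or.inl ⟨n, hd, dividesBB_map q B hq hker h1, dividesBB_map q B hq hker h2⟩
  · refine Or.inr ⟨n, hd, ?_⟩
    rcases h with ⟨h1, h2⟩ | ⟨h1, h2⟩
    · exact Or.inl ⟨dividesAB_map q B hq hker h1, dividesAB_map q B hq hker h2⟩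
    · exact Or.inr ⟨dividesBA_map q B hq hker h1, dividesBA_map q B hq hker h2⟩

theorem depth_map_le (hq : Function.Surjective q) (hker : ∀ x, q x = 0 → x ∈ B) :
    depth (B.map q) ≤ depth B := by
  refine sInf_le_sInf ?_
  rintro d ⟨m, hm, rfl⟩
  exact ⟨m, hasDepth_map q B hq hker m hm, rfl⟩

end DepthAux


/-- Let `B ⊆ A` be an extension of `k`-algebras and `I` an ideal of `A`
contained in `B`.  If `B ⊆ A` has depth `2n+1` (resp. left or right depth `2n`), then so
does the quotient extension `B/I ⊆ A/I` (realized as the image of `B` in `A/I`); in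
particular `d(B/I, A/I) ≤ d(B,A)`. -/
theorem depth_quotient_le
    (k : Type u) [CommRing k] (A : Type u) [Ring A] [Algebra k A] (B : Subalgebra k A)
    (I : TwoSidedIdeal A) (hIB : ∀ x ∈ I, x ∈ B) :
    (∀ n : ℕ, HequivBB B.toSubring (n+1) n →
      HequivBB (B.toSubring.map (I.ringCon.mk' : A →+* I.ringCon.Quotient)) (n+1) n) ∧
    (∀ n : ℕ, HequivAB B.toSubring (n+1) n →
      HequivAB (B.toSubring.map (I.ringCon.mk' : A →+* I.ringCon.Quotient)) (n+1) n) ∧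
    (∀ n : ℕ, HequivBA B.toSubring (n+1) n →
      HequivBA (B.toSubring.map (I.ringCon.mk' : A →+* I.ringCon.Quotient)) (n+1) n) ∧
    depth (B.toSubring.map (I.ringCon.mk' : A →+* I.ringCon.Quotient)) ≤
      depth B.toSubring := by
  have hq : Function.Surjective (I.ringCon.mk' : A →+* I.ringCon.Quotient) :=
    fun y => Quot.inductionOn y fun a => ⟨a, rfl⟩
  have hker : ∀ x : A, (I.ringCon.mk' : A →+* I.ringCon.Quotient) x = 0 → x ∈ B.toSubring := by
    intro x hx
    have h1 : I.ringCon x 0 := I.ringCon.eq.mp hx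
    exact hIB x ((TwoSidedIdeal.mem_iff I x).2 h1)
  exact ⟨fun n h => ⟨DepthAux.dividesBB_map _ _ hq hker h.1,
      DepthAux.dividesBB_map _ _ hq hker h.2⟩,
    fun n h => ⟨DepthAux.dividesAB_map _ _ hq hker h.1,
      DepthAux.dividesAB_map _ _ hq hker h.2⟩,
    fun n h => ⟨DepthAux.dividesBA_map _ _ hq hker h.1,
      DepthAux.dividesBA_map _ _ hq hker h.2⟩,
    DepthAux.depth_map_le _ _ hq hker⟩
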